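/- arXiv:1805.12278 — 2 statements merged into one kernel-verified Lean document; each statement's English description precedes it below -/
import Mathlib

section
/- Let a > 0, b > 0, and q > 0 be real numbers. Then the quantity P* := ( −(a+2)b + √( (a+2)²b² + 4(a+1)(q − b²) ) ) / (2(a+1)) is well defined (the discriminant (a+2)²b² + 4(a+1)(q − b²) is nonnegative), satisfies (a+1)P* + b > 0 and P* + b > 0, and is the unique real number P with (a+1)P + b > 0 and P + b > 0 such that (a+1)/((a+1)P + b) − 1/(P + b) = a·b/q. -/
/-- For `a, b, q > 0`, the quantity
`P* = (−(a+2)b + √((a+2)²b² + 4(a+1)(q − b²)))/(2(a+1))` is well defined (nonnegative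
discriminant), satisfies `(a+1)P* + b > 0` and `P* + b > 0`, and is the unique real `P`
with `(a+1)P + b > 0` and `P + b > 0` solving `(a+1)/((a+1)P + b) − 1/(P + b) = ab/q`. -/
theorem optimal_relay_power_closed_form (a b q : ℝ) (ha : 0 < a) (hb : 0 < b) (hq : 0 < q) :
    0 ≤ (a + 2) ^ 2 * b ^ 2 + 4 * (a + 1) * (q - b ^ 2) ∧
    (let Pstar : ℝ :=
        (-(a + 2) * b + Real.sqrt ((a + 2) ^ 2 * b ^ 2 + 4 * (a + 1) * (q - b ^ 2)))
          / (2 * (a + 1));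
      0 < (a + 1) * Pstar + b ∧ 0 < Pstar + b ∧
      (a + 1) / ((a + 1) * Pstar + b) - 1 / (Pstar + b) = a * b / q ∧
      ∀ P : ℝ, 0 < (a + 1) * P + b → 0 < P + b →
        (a + 1) / ((a + 1) * P + b) - 1 / (P + b) = a * b / q → P = Pstar) := by
  have h1 : (0:ℝ) < a + 1 := by linarith
  have hΔpos : 0 < (a + 2) ^ 2 * b ^ 2 + 4 * (a + 1) * (q - b ^ 2) := by
    have : (a + 2) ^ 2 * b ^ 2 + 4 * (a + 1) * (q - b ^ 2) = a ^ 2 * b ^ 2 + 4 * (a + 1) * q := by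
      ring
    rw [this]; positivity
  refine ⟨hΔpos.le, ?_⟩
  dsimp only
  set s := Real.sqrt ((a + 2) ^ 2 * b ^ 2 + 4 * (a + 1) * (q - b ^ 2)) with hsdef
  have hs2 : s ^ 2 = (a + 2) ^ 2 * b ^ 2 + 4 * (a + 1) * (q - b ^ 2) :=
    Real.sq_sqrt hΔpos.le
  have hs0 : 0 ≤ s := Real.sqrt_nonneg _
  have hsab : a * b < s := by nlinarith
  set Pstar : ℝ := (-(a + 2) * b + s) / (2 * (a + 1)) with hPdef
  have h2 : (a + 1) * Pstar + b = (s - a * b) / 2 := by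
    rw [hPdef]; field_simp; ring
  have h3 : Pstar + b = (a * b + s) / (2 * (a + 1)) := by
    rw [hPdef]; field_simp; ring
  have hD1 : 0 < (a + 1) * Pstar + b := by rw [h2]; linarith
  have hD2 : 0 < Pstar + b := by
    rw [h3]; positivity
  have key : (a + 1) * Pstar ^ 2 + (a + 2) * b * Pstar + b ^ 2 = q := by
    have h4 : 2 * (a + 1) * Pstar = -(a + 2) * b + s := by
      rw [hPdef]; field_simp
    nlinarith [h4, hs2]
  refine ⟨hD1, hD2, ?_, ?_⟩
  · rw [div_sub_div _ _ hD1.ne' hD2.ne']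
    rw [div_eq_div_iff (by positivity) hq.ne']
    nlinarith [key]
  · intro P hP1 hP2 hPeq
    rw [div_sub_div _ _ hP1.ne' hP2.ne', div_eq_div_iff (by positivity) hq.ne'] at hPeq
    have hDP : (a + 1) * P ^ 2 + (a + 2) * b * P + b ^ 2 = q := by
      have hab : (a * b) ≠ 0 := by positivity
      have h5 : a * b * ((a + 1) * P ^ 2 + (a + 2) * b * P + b ^ 2) = a * b * q := by
        linear_combination -hPeq
      exact mul_left_cancel₀ hab h5
    have hfac : (P - Pstar) * ((a + 1) * (P + Pstar) + (a + 2) * b) = 0 := by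
      linear_combination hDP - key
    have hpos : 0 < (a + 1) * (P + Pstar) + (a + 2) * b := by nlinarith [hP1, hD1, mul_pos ha hb]
    have := mul_eq_zero.mp hfac
    rcases this with h | h
    · linarith
    · linarith
end

section
/- Let X be a nonempty compact topological space and let f, g : X → ℝ be continuous functions with g(x) > 0 for all x ∈ X. Define F(ξ) = max_{x ∈ X} ( f(x) − ξ·g(x) ) and ξ* = max_{x ∈ X} f(x)/g(x) (both maxima are attained by compactness). Then F(ξ*) = 0, and ξ* is the unique real number ξ with F(ξ) = 0; moreover a point x* ∈ X attains the maximum of f/g if and only if f(x*) − ξ*·g(x*) = 0. -/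
private lemma exists_max_of_cont {X : Type*} [TopologicalSpace X] [CompactSpace X]
    [Nonempty X] (h : X → ℝ) (hc : Continuous h) :
    ∃ x0, (∀ x, h x ≤ h x0) ∧ (⨆ x, h x) = h x0 := by
  obtain ⟨x0, -, hx0'⟩ := isCompact_univ.exists_isMaxOn Set.univ_nonempty hc.continuousOn
  have hx0 : ∀ x, h x ≤ h x0 := fun x => hx0' (Set.mem_univ x)
  refine ⟨x0, hx0, le_antisymm (ciSup_le hx0)
    (le_ciSup ⟨h x0, Set.forall_mem_range.2 hx0⟩ x0)⟩

/-- For a nonempty compact space `X`, continuous `f, g : X → ℝ` with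
`g > 0`, letting `F(ξ) = max_x (f(x) − ξ·g(x))` and `ξ* = max_x f(x)/g(x)`, one has
`F(ξ*) = 0`, `ξ*` is the unique zero of `F`, and `x*` maximizes `f/g` iff
`f(x*) − ξ*·g(x*) = 0`. -/
theorem dinkelbach_root_characterization
    {X : Type*} [TopologicalSpace X] [CompactSpace X] [Nonempty X]
    (f g : X → ℝ) (hf : Continuous f) (hg : Continuous g) (hgpos : ∀ x, 0 < g x) :
    (⨆ x : X, (f x - (⨆ y : X, f y / g y) * g x)) = 0 ∧
    (∀ ξ : ℝ, (⨆ x : X, (f x - ξ * g x)) = 0 → ξ = ⨆ y : X, f y / g y) ∧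
    (∀ x : X, f x / g x = (⨆ y : X, f y / g y) ↔
      f x - (⨆ y : X, f y / g y) * g x = 0) := by
  have hgne : ∀ x, g x ≠ 0 := fun x => (hgpos x).ne'
  obtain ⟨x0, hx0le, hx0eq⟩ := exists_max_of_cont (fun x => f x / g x)
    (hf.div hg hgne)
  set ξs : ℝ := ⨆ y : X, f y / g y with hξs
  -- key: f x - ξs * g x ≤ 0 for all x, with equality at x0
  have hle : ∀ x, f x - ξs * g x ≤ 0 := by
    intro x
    have h1 : f x / g x ≤ ξs := hx0eq ▸ hx0le x
    have := (div_le_iff₀ (hgpos x)).1 h1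
    linarith
  have hx0zero : f x0 - ξs * g x0 = 0 := by
    have : ξs = f x0 / g x0 := hx0eq
    rw [this, div_mul_cancel₀ _ (hgne x0)]; ring
  have hFzero : (⨆ x : X, (f x - ξs * g x)) = 0 := by
    obtain ⟨x1, hx1le, hx1eq⟩ := exists_max_of_cont (fun x => f x - ξs * g x)
      (hf.sub (continuous_const.mul hg))
    rw [hx1eq]
    exact le_antisymm (hle x1) (hx0zero ▸ hx1le x0)
  refine ⟨hFzero, ?_, ?_⟩
  · intro ξ hξ
    obtain ⟨x1, hx1le, hx1eq⟩ := exists_max_of_cont (fun x => f x - ξ * g x)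
      (hf.sub (continuous_const.mul hg))
    rw [hx1eq] at hξ
    -- all values ≤ 0, so f x / g x ≤ ξ for all x
    have h1 : ξs ≤ ξ := by
      apply ciSup_le
      intro y
      have hy : f y - ξ * g y ≤ 0 := hξ ▸ hx1le y
      rw [div_le_iff₀ (hgpos y)]; linarith
    have h2 : ξ ≤ ξs := by
      have hx : ξ = f x1 / g x1 := by
        rw [eq_div_iff (hgne x1)]; linarith
      calc ξ = f x1 / g x1 := hx
        _ ≤ f x0 / g x0 := hx0le x1
        _ = ξs := hx0eq.symm
    linarith
  · intro x
    constructor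
    · intro h
      have : f x = ξs * g x := by
        rw [← h, div_mul_cancel₀ _ (hgne x)]
      linarith
    · intro h
      have : f x = ξs * g x := by linarith
      rw [this, mul_div_assoc, div_self (hgne x), mul_one]
end
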